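/- arXiv:2009.02698 — 6 statements merged into one kernel-verified Lean document; each statement's English description precedes it below -/
import Mathlib

section
/- Let τ₁, τ₂ be n×n partial permutation matrices such that the 2n×n matrix ω = (τ₁; τ₂) has rank n. Then there exist partial permutation matrices ξ₁, ξ₂ of size n such that the 2n×n matrix (ξ₁; ξ₂) also has rank n, the 2n×2n block matrix g = [[τ₁, ξ₁], [τ₂, −ξ₂]] is invertible, and ξ₁ᵀτ₁ − ξ₂ᵀτ₂ = 0. -/
open Matrix

def IsPartialPerm {n : ℕ} (τ : Matrix (Fin n) (Fin n) ℂ) : Prop :=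
  (∀ i j, τ i j = 0 ∨ τ i j = 1) ∧
  (∀ i j j', τ i j = 1 → τ i j' = 1 → j = j') ∧
  (∀ i i' j, τ i j = 1 → τ i' j = 1 → i = i')

/-- Extend a partial injection `Fin n → Option (Fin n)` to a permutation. -/
lemma exists_perm_extend {n : ℕ} (r : Fin n → Option (Fin n))
    (hinj : ∀ j j' i, r j = some i → r j' = some i → j = j') :
    ∃ π : Equiv.Perm (Fin n), ∀ j i, r j = some i → π j = i := by
  classical
  set p : Fin n → Prop := fun j => (r j).isSome with hp
  set q : Fin n → Prop := fun i => ∃ j, r j = some i with hq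
  have hbij : Function.Bijective
      (fun j : {j // p j} => (⟨(r j.1).get j.2, ⟨j.1, (Option.some_get j.2).symm⟩⟩ : {i // q i})) := by
    constructor
    · rintro ⟨j, hj⟩ ⟨j', hj'⟩ h
      have h' : (r j).get hj = (r j').get hj' := congrArg Subtype.val h
      have e1 : r j = some ((r j).get hj) := (Option.some_get hj).symm
      have e2 : r j' = some ((r j).get hj) := by rw [h']; exact (Option.some_get hj').symm
      exact Subtype.ext (hinj j j' _ e1 e2)
    · rintro ⟨i, j, hj⟩
      refine ⟨⟨j, by simp [hp, hj]⟩, ?_⟩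
      apply Subtype.ext
      simp only
      exact Option.get_of_mem _ hj
  let e : {j // p j} ≃ {i // q i} := Equiv.ofBijective _ hbij
  have hcard : Fintype.card {j // ¬ p j} = Fintype.card {i // ¬ q i} := by
    rw [Fintype.card_subtype_compl, Fintype.card_subtype_compl,
      Fintype.card_congr e]
  let e' : {j // ¬ p j} ≃ {i // ¬ q i} := Fintype.equivOfCardEq hcard
  refine ⟨((Equiv.sumCompl p).symm.trans ((e.sumCongr e').trans (Equiv.sumCompl q))), ?_⟩
  intro j i hj
  have hpj : p j := by simp [hp, hj]
  have : (Equiv.sumCompl p).symm j = Sum.inl ⟨j, hpj⟩ :=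
    Equiv.sumCompl_symm_apply_of_pos hpj
  simp only [Equiv.trans_apply, this, Equiv.sumCongr_apply, Sum.map_inl,
    Equiv.sumCompl_apply_inl]
  show ((e ⟨j, hpj⟩ : {i // q i}) : Fin n) = i
  have : (e ⟨j, hpj⟩ : {i // q i}).1 = (r j).get hpj := rfl
  rw [this]
  exact Option.get_of_mem _ hj

/-- Extract the option-valued row function of a partial permutation matrix. -/
lemma exists_rowfun {n : ℕ} {τ : Matrix (Fin n) (Fin n) ℂ} (h : IsPartialPerm τ) :
    ∃ r : Fin n → Option (Fin n),
      (∀ i j, τ i j = 1 ↔ r j = some i) ∧ (∀ i j, r j ≠ some i → τ i j = 0) := by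
  classical
  obtain ⟨h01, _, hcol⟩ := h
  set r : Fin n → Option (Fin n) := fun j => if hx : ∃ i, τ i j = 1 then some hx.choose else none
    with hr
  have key : ∀ i j, τ i j = 1 ↔ r j = some i := by
    intro i j
    constructor
    · intro h1
      have hx : ∃ i, τ i j = 1 := ⟨i, h1⟩
      simp only [hr, dif_pos hx]
      exact congrArg some (hcol _ _ _ hx.choose_spec h1)
    · intro h1
      by_cases hx : ∃ i', τ i' j = 1
      · simp only [hr, dif_pos hx, Option.some.injEq] at h1
        rw [← h1]; exact hx.choose_spec
      · simp [hr, dif_neg hx] at h1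
  exact ⟨r, key, fun i j hne => (h01 i j).resolve_right (fun h1 => hne ((key i j).1 h1))⟩

theorem exists_complementary_partial_perms {n : ℕ}
    (τ₁ τ₂ : Matrix (Fin n) (Fin n) ℂ)
    (h₁ : IsPartialPerm τ₁) (h₂ : IsPartialPerm τ₂)
    (hrank : (Matrix.fromRows τ₁ τ₂).rank = n) :
    ∃ ξ₁ ξ₂ : Matrix (Fin n) (Fin n) ℂ,
      IsPartialPerm ξ₁ ∧ IsPartialPerm ξ₂ ∧
      (Matrix.fromRows ξ₁ ξ₂).rank = n ∧
      IsUnit (Matrix.fromBlocks τ₁ ξ₁ τ₂ (-ξ₂)) ∧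
      ξ₁ᵀ * τ₁ - ξ₂ᵀ * τ₂ = 0 := by
  classical
  obtain ⟨r₁, key₁, zero₁⟩ := exists_rowfun h₁
  obtain ⟨r₂, key₂, zero₂⟩ := exists_rowfun h₂
  have rinj₁ : ∀ j j' i, r₁ j = some i → r₁ j' = some i → j = j' :=
    fun j j' i hj hj' => h₁.2.1 i j j' ((key₁ i j).2 hj) ((key₁ i j').2 hj')
  have rinj₂ : ∀ j j' i, r₂ j = some i → r₂ j' = some i → j = j' :=
    fun j j' i hj hj' => h₂.2.1 i j j' ((key₂ i j).2 hj) ((key₂ i j').2 hj')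
  obtain ⟨π₁, hπ₁⟩ := exists_perm_extend r₁ rinj₁
  obtain ⟨π₂, hπ₂⟩ := exists_perm_extend r₂ rinj₂
  have ent₁ : ∀ i m, τ₁ i m = if r₁ m = some i then 1 else 0 := by
    intro i m
    by_cases h : r₁ m = some i
    · rw [if_pos h]; exact (key₁ i m).2 h
    · rw [if_neg h]; exact zero₁ i m h
  have ent₂ : ∀ i m, τ₂ i m = if r₂ m = some i then 1 else 0 := by
    intro i m
    by_cases h : r₂ m = some i
    · rw [if_pos h]; exact (key₂ i m).2 h
    · rw [if_neg h]; exact zero₂ i m h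
  -- every column of ω is nonzero
  have hcol : ∀ j, r₁ j = none → r₂ j ≠ none := by
    intro j hj1 hj2
    have hzero : (Matrix.fromRows τ₁ τ₂).mulVecLin (Pi.single j 1) = 0 := by
      rw [Matrix.mulVecLin_apply, Matrix.mulVec_single]
      funext q
      rcases q with u | v
      · simp [Matrix.fromRows_apply_inl, ent₁, hj1]
      · simp [Matrix.fromRows_apply_inr, ent₂, hj2]
    have hker : LinearMap.ker (Matrix.fromRows τ₁ τ₂).mulVecLin = ⊥ := by
      have h0 := LinearMap.finrank_range_add_finrank_ker (Matrix.fromRows τ₁ τ₂).mulVecLin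
      rw [Module.finrank_fintype_fun_eq_card, Fintype.card_fin] at h0
      have hr : Module.finrank ℂ (LinearMap.range (Matrix.fromRows τ₁ τ₂).mulVecLin) = n := hrank
      rw [hr] at h0
      have : Module.finrank ℂ (LinearMap.ker (Matrix.fromRows τ₁ τ₂).mulVecLin) = 0 := by omega
      exact Submodule.finrank_eq_zero.mp this
    have hmem : Pi.single j (1:ℂ) ∈ LinearMap.ker (Matrix.fromRows τ₁ τ₂).mulVecLin :=
      LinearMap.mem_ker.mpr hzero
    rw [hker, Submodule.mem_bot] at hmem
    have := congrFun hmem j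
    simp at this
  -- masks
  set c₁ : Fin n → Prop := fun j => (r₂ j).isSome ∨ r₁ j = none with hc₁def
  set c₂ : Fin n → Prop := fun j => (r₁ j).isSome ∨ r₂ j = none with hc₂def
  set ξ₁ : Matrix (Fin n) (Fin n) ℂ :=
    Matrix.of (fun i j => @ite ℂ (c₁ j ∧ π₁ j = i) (Classical.propDecidable _) 1 0) with hξ₁def
  set ξ₂ : Matrix (Fin n) (Fin n) ℂ :=
    Matrix.of (fun i j => @ite ℂ (c₂ j ∧ π₂ j = i) (Classical.propDecidable _) 1 0) with hξ₂def
  have hξ₁app : ∀ i j, ξ₁ i j = @ite ℂ (c₁ j ∧ π₁ j = i) (Classical.propDecidable _) 1 0 := fun i j => rfl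
  have hξ₂app : ∀ i j, ξ₂ i j = @ite ℂ (c₂ j ∧ π₂ j = i) (Classical.propDecidable _) 1 0 := fun i j => rfl
  have hpp : ∀ (c : Fin n → Prop) (π : Equiv.Perm (Fin n)),
      IsPartialPerm (Matrix.of (fun i j => @ite ℂ (c j ∧ π j = i) (Classical.propDecidable _) 1 0)) := by
    intro c π
    have hone : ∀ i j,
        (Matrix.of (fun i j => @ite ℂ (c j ∧ π j = i) (Classical.propDecidable _) 1 0)) i j = 1 →
        c j ∧ π j = i := by
      intro i j hj
      by_contra hcon
      simp only [Matrix.of_apply, if_neg hcon] at hj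
      exact zero_ne_one hj
    refine ⟨fun i j => ?_, fun i j j' hj hj' => ?_, fun i i' j hi hi' => ?_⟩
    · by_cases h : c j ∧ π j = i
      · right; simp [Matrix.of_apply, h]
      · left; simp [Matrix.of_apply, h]
    · exact π.injective (((hone i j hj).2).trans ((hone i j' hj').2).symm)
    · exact ((hone i j hi).2).symm.trans ((hone i' j hi').2)
  -- main summation lemma
  have main_sum : ∀ (r r' : Fin n → Option (Fin n)) (c : Fin n → Prop) (π : Equiv.Perm (Fin n)),
      (∀ j, c j ↔ ((r' j).isSome ∨ r j = none)) →
      (∀ j i, r j = some i → π j = i) →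
      (∀ j j' i, r j = some i → r j' = some i → j = j') →
      ∀ j m, (∑ i, (@ite ℂ (c j ∧ π j = i) (Classical.propDecidable _) 1 0) *
          (if r m = some i then 1 else 0))
        = if ((r j).isSome ∧ (r' j).isSome ∧ j = m) then 1 else 0 := by
    intro r r' c π hc hπ hinj j m
    by_cases hcj : c j
    · have hsum : ∀ i, (@ite ℂ (c j ∧ π j = i) (Classical.propDecidable _) 1 0) *
          (if r m = some i then 1 else 0)
          = if π j = i then (if r m = some i then (1:ℂ) else 0) else 0 := by
        intro i
        by_cases h : π j = i
        · simp [h, hcj]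
        · simp [h]
      rw [Finset.sum_congr rfl (fun i _ => hsum i), Finset.sum_ite_eq]
      simp only [Finset.mem_univ, if_true]
      have hiff : (r m = some (π j)) ↔ ((r j).isSome ∧ (r' j).isSome ∧ j = m) := by
        constructor
        · intro h
          cases hr : r j with
          | some i₀ =>
            have hpj : π j = i₀ := hπ j i₀ hr
            have hm : m = j := hinj m j (π j) h (by rw [hr, hpj])
            subst hm
            refine ⟨by simp [hr], ?_, rfl⟩
            rcases (hc m).1 hcj with h' | h'
            · exact h'
            · rw [h'] at hr; cases hr
          | none =>
            have hmj : m = j := π.injective (hπ m (π j) h)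
            rw [hmj, hr] at h; cases h
        · rintro ⟨hs1, _, rfl⟩
          obtain ⟨i₀, hi₀⟩ := Option.isSome_iff_exists.mp hs1
          rw [hπ j i₀ hi₀]; exact hi₀
      rw [if_congr hiff rfl rfl]
    · have hneg : ¬((r j).isSome ∧ (r' j).isSome ∧ j = m) := by
        rintro ⟨_, hs', _⟩; exact hcj ((hc j).2 (Or.inl hs'))
      rw [if_neg hneg]
      exact Finset.sum_eq_zero (fun i _ => by simp [hcj])
  -- orthogonality
  have horth : ξ₁ᵀ * τ₁ - ξ₂ᵀ * τ₂ = 0 := by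
    ext j m
    simp only [Matrix.sub_apply, Matrix.mul_apply, Matrix.transpose_apply, Matrix.zero_apply]
    have e1 : ∑ i, ξ₁ i j * τ₁ i m
        = if ((r₁ j).isSome ∧ (r₂ j).isSome ∧ j = m) then 1 else 0 := by
      rw [Finset.sum_congr rfl (fun i _ => by rw [hξ₁app, ent₁])]
      exact main_sum r₁ r₂ c₁ π₁ (fun j => Iff.rfl) hπ₁ rinj₁ j m
    have e2 : ∑ i, ξ₂ i j * τ₂ i m
        = if ((r₂ j).isSome ∧ (r₁ j).isSome ∧ j = m) then 1 else 0 := by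
      rw [Finset.sum_congr rfl (fun i _ => by rw [hξ₂app, ent₂])]
      exact main_sum r₂ r₁ c₂ π₂ (fun j => Iff.rfl) hπ₂ rinj₂ j m
    have hAB : ((r₁ j).isSome = true ∧ (r₂ j).isSome = true ∧ j = m)
        ↔ ((r₂ j).isSome = true ∧ (r₁ j).isSome = true ∧ j = m) := by tauto
    rw [e1, e2, if_congr hAB rfl rfl, sub_self]
  -- rank of (ξ₁; ξ₂)
  have hker2 : ∀ x : Fin n → ℂ, Matrix.fromRows ξ₁ ξ₂ *ᵥ x = 0 → x = 0 := by
    intro x hx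
    funext j
    by_cases hcj : c₁ j
    · have h0 := congrFun hx (Sum.inl (π₁ j))
      simp only [Matrix.mulVec, dotProduct, Matrix.fromRows_apply_inl,
        Pi.zero_apply] at h0
      have hterm : ∀ j', ξ₁ (π₁ j) j' * x j' = if j' = j then x j' else 0 := by
        intro j'
        by_cases h : j' = j
        · subst h; simp [hξ₁app, hcj]
        · have hne : ¬(c₁ j' ∧ π₁ j' = π₁ j) := fun hcc => h (π₁.injective hcc.2)
          simp [hξ₁app, hne, h]
      rw [Finset.sum_congr rfl (fun j' _ => hterm j'), Finset.sum_ite_eq'] at h0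
      simpa using h0
    · have hc2j : c₂ j := by
        simp only [hc₁def, not_or] at hcj
        left
        exact Option.ne_none_iff_isSome.mp hcj.2
      have h0 := congrFun hx (Sum.inr (π₂ j))
      simp only [Matrix.mulVec, dotProduct, Matrix.fromRows_apply_inr,
        Pi.zero_apply] at h0
      have hterm : ∀ j', ξ₂ (π₂ j) j' * x j' = if j' = j then x j' else 0 := by
        intro j'
        by_cases h : j' = j
        · subst h; simp [hξ₂app, hc2j]
        · have hne : ¬(c₂ j' ∧ π₂ j' = π₂ j) := fun hcc => h (π₂.injective hcc.2)
          simp [hξ₂app, hne, h]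
      rw [Finset.sum_congr rfl (fun j' _ => hterm j'), Finset.sum_ite_eq'] at h0
      simpa using h0
  have hkerbot : LinearMap.ker (Matrix.fromRows ξ₁ ξ₂).mulVecLin = ⊥ :=
    LinearMap.ker_eq_bot'.mpr (fun x hx => hker2 x (by simpa [Matrix.mulVecLin_apply] using hx))
  have hrk : (Matrix.fromRows ξ₁ ξ₂).rank = n := by
    have h0 := LinearMap.finrank_range_add_finrank_ker (Matrix.fromRows ξ₁ ξ₂).mulVecLin
    rw [hkerbot, finrank_bot, add_zero, Module.finrank_fintype_fun_eq_card,
      Fintype.card_fin] at h0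
    exact h0
  -- invertibility of g
  have hsurj : ∀ k : Fin n ⊕ Fin n, ∃ x : Fin n ⊕ Fin n → ℂ,
      Matrix.fromBlocks τ₁ ξ₁ τ₂ (-ξ₂) *ᵥ x = Pi.single k 1 := by
    rintro (u | v)
    · obtain ⟨j₀, hu⟩ : ∃ j₀, π₁ j₀ = u := ⟨π₁.symm u, π₁.apply_symm_apply u⟩
      cases hr : r₁ j₀ with
      | some i₀ =>
        have hru : r₁ j₀ = some u := by
          rw [hr]; exact congrArg some (by rw [← hu, hπ₁ j₀ i₀ hr])
        cases hr2 : r₂ j₀ with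
        | some v₀ =>
          have hv : π₂ j₀ = v₀ := hπ₂ j₀ v₀ hr2
          have hc1 : c₁ j₀ := Or.inl (by simp [hr2])
          have hc2 : c₂ j₀ := Or.inl (by simp [hru])
          refine ⟨Pi.single (Sum.inl j₀) (1/2) + Pi.single (Sum.inr j₀) (1/2), ?_⟩
          rw [Matrix.mulVec_add, Matrix.mulVec_single, Matrix.mulVec_single]
          ext q
          rcases q with u' | v'
          · show τ₁ u' j₀ * (1/2) + ξ₁ u' j₀ * (1/2) = _
            by_cases h : u' = u
            · subst h
              simp [ent₁, hξ₁app, hru, hu, hc1, Pi.single_apply]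
              norm_num
            · simp [ent₁, hξ₁app, hru, hu, h, Ne.symm h, Pi.single_apply]
          · show τ₂ v' j₀ * (1/2) + (-ξ₂) v' j₀ * (1/2) = _
            by_cases h : v' = v₀
            · subst h
              simp [ent₂, hξ₂app, hr2, hv, hc2, Pi.single_apply]
            · simp [ent₂, hξ₂app, hr2, hv, h, Ne.symm h, Pi.single_apply]
        | none =>
          refine ⟨Pi.single (Sum.inl j₀) 1, ?_⟩
          rw [Matrix.mulVec_single]
          ext q
          rcases q with u' | v'
          · show τ₁ u' j₀ * 1 = _
            by_cases h : u' = u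
            · subst h; simp [ent₁, hru, Pi.single_apply]
            · simp [ent₁, hru, h, Ne.symm h, Pi.single_apply]
          · show τ₂ v' j₀ * 1 = _
            have : τ₂ v' j₀ = 0 := zero₂ v' j₀ (by simp [hr2])
            simp [this, Pi.single_apply]
      | none =>
        have hc1 : c₁ j₀ := Or.inr hr
        have hnc2 : ¬ c₂ j₀ := by
          rintro (hs | hn)
          · rw [hr] at hs; simp at hs
          · exact hcol j₀ hr hn
        refine ⟨Pi.single (Sum.inr j₀) 1, ?_⟩
        rw [Matrix.mulVec_single]
        ext q
        rcases q with u' | v'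
        · show ξ₁ u' j₀ * 1 = _
          by_cases h : u' = u
          · subst h; simp [hξ₁app, hc1, hu, Pi.single_apply]
          · simp [hξ₁app, hc1, hu, h, Ne.symm h, Pi.single_apply]
        · show (-ξ₂) v' j₀ * 1 = _
          simp [hξ₂app, hnc2, Pi.single_apply]
    · obtain ⟨j₀, hv⟩ : ∃ j₀, π₂ j₀ = v := ⟨π₂.symm v, π₂.apply_symm_apply v⟩
      cases hr2 : r₂ j₀ with
      | some v₀ =>
        have hrv : r₂ j₀ = some v := by
          rw [hr2]; exact congrArg some (by rw [← hv, hπ₂ j₀ v₀ hr2])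
        cases hr : r₁ j₀ with
        | some u₀ =>
          have hu0 : π₁ j₀ = u₀ := hπ₁ j₀ u₀ hr
          have hc1 : c₁ j₀ := Or.inl (by simp [hrv])
          have hc2 : c₂ j₀ := Or.inl (by simp [hr])
          refine ⟨Pi.single (Sum.inl j₀) (1/2) + Pi.single (Sum.inr j₀) (-(1/2)), ?_⟩
          rw [Matrix.mulVec_add, Matrix.mulVec_single, Matrix.mulVec_single]
          ext q
          rcases q with u' | v'
          · show τ₁ u' j₀ * (1/2) + ξ₁ u' j₀ * (-(1/2)) = _
            by_cases h : u' = u₀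
            · subst h
              simp [ent₁, hξ₁app, hr, hu0, hc1, Pi.single_apply]
            · simp [ent₁, hξ₁app, hr, hu0, h, Ne.symm h, Pi.single_apply]
          · show τ₂ v' j₀ * (1/2) + (-ξ₂) v' j₀ * (-(1/2)) = _
            by_cases h : v' = v
            · subst h
              simp [ent₂, hξ₂app, hrv, hv, hc2, Pi.single_apply]
              norm_num
            · simp [ent₂, hξ₂app, hrv, hv, h, Ne.symm h, Pi.single_apply]
        | none =>
          refine ⟨Pi.single (Sum.inl j₀) 1, ?_⟩
          rw [Matrix.mulVec_single]
          ext q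
          rcases q with u' | v'
          · show τ₁ u' j₀ * 1 = _
            have : τ₁ u' j₀ = 0 := zero₁ u' j₀ (by simp [hr])
            simp [this, Pi.single_apply]
          · show τ₂ v' j₀ * 1 = _
            by_cases h : v' = v
            · subst h; simp [ent₂, hrv, Pi.single_apply]
            · simp [ent₂, hrv, h, Ne.symm h, Pi.single_apply]
      | none =>
        have hrn : r₁ j₀ ≠ none := fun hn => hcol j₀ hn hr2
        have hc2 : c₂ j₀ := Or.inr hr2
        have hnc1 : ¬ c₁ j₀ := by
          rintro (hs | hn)
          · rw [hr2] at hs; simp at hs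
          · exact hrn hn
        refine ⟨Pi.single (Sum.inr j₀) (-1), ?_⟩
        rw [Matrix.mulVec_single]
        ext q
        rcases q with u' | v'
        · show ξ₁ u' j₀ * (-1) = _
          simp [hξ₁app, hnc1, Pi.single_apply]
        · show (-ξ₂) v' j₀ * (-1) = _
          by_cases h : v' = v
          · subst h; simp [hξ₂app, hc2, hv, Pi.single_apply]
          · simp [hξ₂app, hc2, hv, h, Ne.symm h, Pi.single_apply]
  choose xk hxk using hsurj
  have hGB : Matrix.fromBlocks τ₁ ξ₁ τ₂ (-ξ₂) * Matrix.of (fun p k => xk k p) = 1 := by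
    ext i k
    have h0 := congrFun (hxk k) i
    simp only [Matrix.mulVec, dotProduct, Pi.single_apply] at h0
    simp only [Matrix.mul_apply, Matrix.of_apply, Matrix.one_apply]
    rw [h0]
  exact ⟨ξ₁, ξ₂, hpp c₁ π₁, hpp c₂ π₂, hrk, (Matrix.isUnit_iff_isUnit_det _).2 (Matrix.isUnit_det_of_right_inverse hGB), horth⟩
end

section
/- Let g be an invertible complex matrix. Then there exists a polynomial f(T) ∈ ℂ[T] such that f(g)² = g; in particular every invertible complex matrix has a square root that is a polynomial in the matrix. -/
open Matrix Polynomial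

private lemma hensel_step (lam : ℂ) (hlam : lam ≠ 0) (k : ℕ) :
    ∃ f : Polynomial ℂ, (X - C lam) ^ (k + 1) ∣ f ^ 2 - X ∧ f.eval lam ≠ 0 := by
  induction k with
  | zero =>
    obtain ⟨mu, hmu⟩ : ∃ mu : ℂ, mu ^ 2 = lam :=
      IsAlgClosed.exists_pow_nat_eq lam two_pos
    refine ⟨C mu, ?_, ?_⟩
    · rw [pow_one, dvd_iff_isRoot]
      simp [IsRoot, hmu]
    · simp only [eval_C]
      rintro rfl; simp at hmu; exact hlam hmu.symm
  | succ k ih =>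
    obtain ⟨f, ⟨h, hh⟩, hf⟩ := ih
    set c : ℂ := -(h.eval lam) / (2 * f.eval lam) with hc
    refine ⟨f + C c * (X - C lam) ^ (k + 1), ?_, ?_⟩
    · have key : (f + C c * (X - C lam) ^ (k + 1)) ^ 2 - X
          = (X - C lam) ^ (k + 1) * (h + 2 * C c * f + C c ^ 2 * (X - C lam) ^ (k + 1)) := by
        have : f ^ 2 - X = (X - C lam) ^ (k + 1) * h := hh
        ring_nf
        ring_nf at this
        linear_combination this
      rw [key, pow_succ]
      refine mul_dvd_mul_left _ ?_
      rw [dvd_iff_isRoot]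
      simp only [IsRoot, eval_add, eval_mul, eval_pow, eval_ofNat, eval_C, eval_sub, eval_X,
        sub_self, zero_pow (Nat.succ_ne_zero k), mul_zero, add_zero]
      field_simp [hc]
      have := div_mul_cancel₀ (-(h.eval lam)) (mul_ne_zero two_ne_zero hf)
      rw [hc]; linear_combination this
    · simp [hf]

private lemma key_lemma : ∀ n : ℕ, ∀ p : Polynomial ℂ, p.natDegree ≤ n → p.eval 0 ≠ 0 →
    ∃ f : Polynomial ℂ, p ∣ f ^ 2 - X := by
  intro n
  induction n with
  | zero =>
    intro p hdeg h0
    have hp : p = C (p.coeff 0) := eq_C_of_natDegree_le_zero hdeg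
    have : IsUnit p := by
      rw [hp]; exact isUnit_C.mpr (isUnit_iff_ne_zero.mpr (by rw [coeff_zero_eq_eval_zero]; exact h0))
    exact ⟨0, this.dvd⟩
  | succ n ih =>
    intro p hdeg h0
    by_cases hle : p.natDegree ≤ n
    · exact ih p hle h0
    have hdeg' : p.natDegree = n + 1 := le_antisymm hdeg (not_le.mp hle)
    have hp0 : p ≠ 0 := fun h => h0 (by simp [h])
    obtain ⟨lam, hlam⟩ : ∃ lam, p.IsRoot lam := by
      apply Complex.exists_root
      rw [degree_eq_natDegree hp0, hdeg']
      exact_mod_cast Nat.succ_pos n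
    have hlam0 : lam ≠ 0 := fun h => h0 (by rw [h] at hlam; exact hlam)
    obtain ⟨q, hq, hqnd⟩ := p.exists_eq_pow_rootMultiplicity_mul_and_not_dvd hp0 lam
    have hkpos : 0 < p.rootMultiplicity lam := (rootMultiplicity_pos hp0).mpr hlam
    obtain ⟨k', hk'⟩ : ∃ k', p.rootMultiplicity lam = k' + 1 :=
      ⟨p.rootMultiplicity lam - 1, by omega⟩
    rw [hk'] at hq
    set k := k' + 1 with hk
    have hq0 : q.eval 0 ≠ 0 := by
      intro h
      apply h0
      rw [hq]; simp [h]
    have hdq : q.natDegree ≤ n := by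
      have : p.natDegree = k + q.natDegree := by
        rw [hq, natDegree_mul (pow_ne_zero _ (X_sub_C_ne_zero lam))
          (fun h => hq0 (by simp [h])), natDegree_pow, natDegree_X_sub_C, mul_one]
      omega
    obtain ⟨fq, hfq⟩ := ih q hdq hq0
    obtain ⟨f1, hf1, -⟩ := hensel_step lam hlam0 k'
    have hcop : IsCoprime ((X - C lam) ^ (k' + 1)) q :=
      (((irreducible_X_sub_C lam).coprime_iff_not_dvd.mpr hqnd)).pow_left
    obtain ⟨u, v, huv⟩ := id hcop
    set f := f1 * (v * q) + fq * (u * (X - C lam) ^ (k' + 1)) with hf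
    have d1 : (X - C lam) ^ (k' + 1) ∣ f ^ 2 - X := by
      have hsub : (X - C lam) ^ (k' + 1) ∣ f - f1 := by
        have : f - f1 = (fq - f1) * u * (X - C lam) ^ (k' + 1) := by
          have : v * q = 1 - u * (X - C lam) ^ (k' + 1) := by linear_combination huv
          rw [hf, this]; ring
        exact this ▸ Dvd.intro_left _ rfl
      have : f ^ 2 - X = (f - f1) * (f + f1) + (f1 ^ 2 - X) := by ring
      rw [this]
      exact dvd_add (hsub.mul_right _) hf1
    have d2 : q ∣ f ^ 2 - X := by
      have hsub : q ∣ f - fq := by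
        have : f - fq = (f1 - fq) * v * q := by
          have : u * (X - C lam) ^ (k' + 1) = 1 - v * q := by linear_combination huv
          rw [hf, this]; ring
        exact this ▸ Dvd.intro_left _ rfl
      have : f ^ 2 - X = (f - fq) * (f + fq) + (fq ^ 2 - X) := by ring
      rw [this]
      exact dvd_add (hsub.mul_right _) hfq
    exact ⟨f, hq ▸ hcop.mul_dvd d1 d2⟩

theorem exists_polynomial_square_root {m : ℕ}
    (g : Matrix (Fin m) (Fin m) ℂ) (hg : IsUnit g) :
    ∃ f : Polynomial ℂ, (Polynomial.aeval g f) ^ 2 = g := by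
  have hdet : g.det ≠ 0 := ((Matrix.isUnit_iff_isUnit_det g).mp hg).ne_zero
  have h0 : g.charpoly.eval 0 ≠ 0 := by
    rw [← coeff_zero_eq_eval_zero]
    intro h
    apply hdet
    rw [g.det_eq_sign_charpoly_coeff, h, mul_zero]
  obtain ⟨f, r, hr⟩ := key_lemma g.charpoly.natDegree g.charpoly le_rfl h0
  refine ⟨f, ?_⟩
  have h : (Polynomial.aeval g) (f ^ 2 - X) = 0 := by
    rw [hr, _root_.map_mul, Matrix.aeval_self_charpoly, zero_mul]
  rwa [map_sub, map_pow, aeval_X, sub_eq_zero] at h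
end

section
/- Let σ(g) = Jₙ⁻¹(gᵀ)⁻¹Jₙ on GL₂ₙ(ℂ) and let P be the stabilizer in GL₂ₙ(ℂ) of the subspace V⁺ = span(e₁,…,eₙ) ⊂ ℂ²ⁿ. Then P is σ-stable, and for every h ∈ P with σ(h) = h⁻¹ there exists f ∈ P with σ(f) = f⁻¹ and f² = h. -/
open Matrix Polynomial

def Jmat (n : ℕ) : Matrix (Fin n ⊕ Fin n) (Fin n ⊕ Fin n) ℂ :=
  Matrix.fromBlocks 0 (-1) 1 0

noncomputable def sigmaMap (n : ℕ) (g : Matrix (Fin n ⊕ Fin n) (Fin n ⊕ Fin n) ℂ) :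
    Matrix (Fin n ⊕ Fin n) (Fin n ⊕ Fin n) ℂ :=
  (Jmat n)⁻¹ * (gᵀ)⁻¹ * Jmat n

/-- `g` stabilizes `V⁺ = span(e₁,…,eₙ)`, the subspace of vectors supported on the
first `n` coordinates. -/
def StabVplus (n : ℕ) (g : Matrix (Fin n ⊕ Fin n) (Fin n ⊕ Fin n) ℂ) : Prop :=
  ∀ v : (Fin n ⊕ Fin n) → ℂ, (∀ j, v (Sum.inr j) = 0) →
    ∀ j, (g.mulVec v) (Sum.inr j) = 0

namespace SiegelAux

variable {n : ℕ}

lemma J_mul_J : Jmat n * Jmat n = -1 := by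
  rw [Jmat, fromBlocks_multiply, ← fromBlocks_one (l := Fin n) (m := Fin n) (α := ℂ),
    fromBlocks_neg]
  congr 1 <;> simp

lemma J_mul_negJ : Jmat n * (-Jmat n) = 1 := by rw [mul_neg, J_mul_J, neg_neg]

lemma J_inv : (Jmat n)⁻¹ = -Jmat n := inv_eq_right_inv J_mul_negJ

lemma isUnit_J : IsUnit (Jmat n) :=
  (Matrix.isUnit_iff_isUnit_det _).mpr (Matrix.isUnit_det_of_right_inverse J_mul_negJ)

lemma mul_Jinv : Jmat n * (Jmat n)⁻¹ = 1 := by rw [J_inv]; exact J_mul_negJ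

lemma Jinv_mul : (Jmat n)⁻¹ * Jmat n = 1 := by
  rw [J_inv, neg_mul, J_mul_J, neg_neg]

lemma isUnit_transpose {m : Type*} [Fintype m] [DecidableEq m] {A : Matrix m m ℂ}
    (h : IsUnit A) : IsUnit Aᵀ := by
  rw [Matrix.isUnit_iff_isUnit_det, det_transpose]
  exact (Matrix.isUnit_iff_isUnit_det _).mp h

lemma isUnit_inv {m : Type*} [Fintype m] [DecidableEq m] {A : Matrix m m ℂ} (h : IsUnit A) :
    IsUnit A⁻¹ := by
  rw [Matrix.isUnit_iff_isUnit_det]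
  exact Matrix.isUnit_det_of_right_inverse
    (Matrix.nonsing_inv_mul A ((Matrix.isUnit_iff_isUnit_det _).mp h))

lemma stab_iff (g : Matrix (Fin n ⊕ Fin n) (Fin n ⊕ Fin n) ℂ) :
    StabVplus n g ↔ ∀ i j, g (Sum.inr i) (Sum.inl j) = 0 := by
  constructor
  · intro H i j
    have := H (Pi.single (Sum.inl j) 1) (fun j' => by simp [Pi.single_apply]) i
    simpa [Matrix.mulVec_single] using this
  · intro H v hv j
    rw [Matrix.mulVec, dotProduct, Fintype.sum_sum_type]
    simp [H, hv]

lemma conjJ (A B C D : Matrix (Fin n) (Fin n) ℂ) :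
    (Jmat n)⁻¹ * fromBlocks A B C D * Jmat n = fromBlocks D (-C) (-B) A := by
  rw [J_inv, Jmat, fromBlocks_neg, fromBlocks_multiply, fromBlocks_multiply]
  congr 1 <;> simp

/-- the subalgebra of block upper-triangular matrices -/
def lowerBlockZero (n : ℕ) : Subalgebra ℂ (Matrix (Fin n ⊕ Fin n) (Fin n ⊕ Fin n) ℂ) where
  carrier := {g | ∀ i j, g (Sum.inr i) (Sum.inl j) = 0}
  mul_mem' := by
    intro a b ha hb i j
    simp only [Set.mem_setOf_eq] at ha hb
    rw [Matrix.mul_apply, Fintype.sum_sum_type]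
    simp [ha, hb]
  one_mem' := fun i j => Matrix.one_apply_ne (by simp)
  add_mem' := by
    intro a b ha hb i j
    simp only [Set.mem_setOf_eq] at ha hb
    simp [Matrix.add_apply, ha i j, hb i j]
  zero_mem' := fun i j => rfl
  algebraMap_mem' := by
    intro c i j
    simp [Matrix.algebraMap_matrix_apply]

/-- the anti-involution τ(A) = J⁻¹ Aᵀ J as a linear map -/
noncomputable def tauL (n : ℕ) : Matrix (Fin n ⊕ Fin n) (Fin n ⊕ Fin n) ℂ →ₗ[ℂ]
    Matrix (Fin n ⊕ Fin n) (Fin n ⊕ Fin n) ℂ where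
  toFun A := (Jmat n)⁻¹ * Aᵀ * Jmat n
  map_add' A B := by rw [transpose_add, Matrix.mul_add, Matrix.add_mul]
  map_smul' c A := by
    rw [transpose_smul, Matrix.mul_smul, Matrix.smul_mul, RingHom.id_apply]

lemma tauL_mul (A B : Matrix (Fin n ⊕ Fin n) (Fin n ⊕ Fin n) ℂ) :
    tauL n (A * B) = tauL n B * tauL n A := by
  show (Jmat n)⁻¹ * (A * B)ᵀ * Jmat n
      = ((Jmat n)⁻¹ * Bᵀ * Jmat n) * ((Jmat n)⁻¹ * Aᵀ * Jmat n)
  rw [transpose_mul]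
  simp only [Matrix.mul_assoc]
  rw [← Matrix.mul_assoc (Jmat n) (Jmat n)⁻¹, mul_Jinv, Matrix.one_mul]

lemma tauL_pow (A : Matrix (Fin n ⊕ Fin n) (Fin n ⊕ Fin n) ℂ) (k : ℕ) :
    tauL n (A ^ k) = tauL n A ^ k := by
  induction k with
  | zero =>
    show (Jmat n)⁻¹ * (1 : Matrix _ _ ℂ)ᵀ * Jmat n = 1
    rw [transpose_one, Matrix.mul_one, Jinv_mul]
  | succ k ih => rw [pow_succ, tauL_mul, ih, ← pow_succ']

lemma tauL_aeval (h : Matrix (Fin n ⊕ Fin n) (Fin n ⊕ Fin n) ℂ) (hτ : tauL n h = h)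
    (p : ℂ[X]) : tauL n (aeval h p) = aeval h p := by
  rw [aeval_eq_sum_range, map_sum]
  refine Finset.sum_congr rfl fun i _ => ?_
  rw [LinearMap.map_smul, tauL_pow, hτ]


-- Hensel lift for square root of X mod (X - λ)^k
lemma sqrtX_local (lam : ℂ) (hl : lam ≠ 0) :
    ∀ k : ℕ, ∃ p : ℂ[X], (X - C lam) ^ k ∣ p ^ 2 - X ∧ p.eval lam ≠ 0 := by
  obtain ⟨s, hs⟩ := IsAlgClosed.exists_pow_nat_eq lam (n := 2) (by norm_num)
  have hs0 : s ≠ 0 := fun h => hl (by simp [← hs, h])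
  intro k
  induction k with
  | zero => exact ⟨C s, by simp, by simpa using hs0⟩
  | succ k ih =>
    rcases Nat.eq_zero_or_pos k with rfl | hk
    · refine ⟨C s, ?_, by simpa using hs0⟩
      rw [pow_one, dvd_iff_isRoot]
      simp [IsRoot, hs]
    · obtain ⟨p, hdvd, hpl⟩ := ih
      obtain ⟨q, hq⟩ := hdvd
      set c : ℂ := -(q.eval lam) / (2 * p.eval lam) with hc
      refine ⟨p + C c * (X - C lam) ^ k, ?_, ?_⟩
      · have key : (p + C c * (X - C lam) ^ k) ^ 2 - X
            = (X - C lam) ^ k * (q + 2 * C c * p) + (C c) ^ 2 * ((X - C lam) ^ k) ^ 2 := by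
          linear_combination hq
        rw [key]
        apply dvd_add
        · rw [pow_succ]
          apply mul_dvd_mul_left
          rw [dvd_iff_isRoot]
          simp only [IsRoot, eval_add, eval_mul, eval_ofNat, eval_C]
          have hcc : c * (2 * eval lam p) = -eval lam q := by
            rw [hc]; exact div_mul_cancel₀ _ (mul_ne_zero two_ne_zero hpl)
          linear_combination hcc
        · exact Dvd.dvd.mul_left (by rw [← pow_mul]; exact pow_dvd_pow _ (by omega)) _
      · simpa [zero_pow hk.ne'] using hpl

lemma sqrtX_mod (m : ℂ[X]) (h0 : m.eval 0 ≠ 0) : ∃ p : ℂ[X], m ∣ p ^ 2 - X := by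
  have key : ∀ N : ℕ, ∀ m : ℂ[X], m.natDegree ≤ N → m.eval 0 ≠ 0 → ∃ p : ℂ[X], m ∣ p ^ 2 - X := by
    intro N
    induction N with
    | zero =>
      intro m hdeg h0
      refine ⟨0, ?_⟩
      have : m = C (m.coeff 0) := eq_C_of_natDegree_eq_zero (Nat.le_zero.mp hdeg)
      rw [this]
      exact (isUnit_C.mpr (isUnit_iff_ne_zero.mpr (by rwa [this, eval_C] at h0))).dvd
    | succ N ih =>
      intro m hdeg h0
      rcases Nat.eq_zero_or_pos m.natDegree with hd0 | hdpos
      · refine ⟨0, ?_⟩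
        have : m = C (m.coeff 0) := eq_C_of_natDegree_eq_zero hd0
        rw [this]
        exact (isUnit_C.mpr (isUnit_iff_ne_zero.mpr (by rwa [this, eval_C] at h0))).dvd
      have hm0 : m ≠ 0 := fun h => h0 (by simp [h])
      obtain ⟨lam, hroot⟩ := Complex.exists_root (natDegree_pos_iff_degree_pos.mp hdpos)
      have hl : lam ≠ 0 := by rintro rfl; exact h0 hroot
      set k := m.rootMultiplicity lam with hk
      obtain ⟨m', hm', hnd⟩ := m.exists_eq_pow_rootMultiplicity_mul_and_not_dvd hm0 lam
      have hkpos : 0 < k := (rootMultiplicity_pos hm0).mpr hroot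
      have hm'0 : m' ≠ 0 := fun h => hm0 (by rw [hm', h, mul_zero])
      have hXl : (X - C lam : ℂ[X]) ≠ 0 := X_sub_C_ne_zero lam
      have hdeg' : m'.natDegree ≤ N := by
        have := natDegree_mul (pow_ne_zero k hXl) hm'0
        rw [← hm'] at this
        rw [natDegree_pow, natDegree_X_sub_C, mul_one] at this
        omega
      have h0' : m'.eval 0 ≠ 0 := by
        intro h
        apply h0
        rw [hm', eval_mul, h, mul_zero]
      obtain ⟨p₂, hp₂⟩ := ih m' hdeg' h0'
      obtain ⟨p₁, hp₁, -⟩ := sqrtX_local lam hl k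
      have hcop : IsCoprime ((X - C lam) ^ k) m' :=
        ((irreducible_X_sub_C lam).coprime_iff_not_dvd.mpr hnd).pow_left
      have hcop2 := hcop
      obtain ⟨u, v, huv⟩ := hcop2
      set p := p₁ * (v * m') + p₂ * (u * (X - C lam) ^ k) with hp
      have d1 : (X - C lam) ^ k ∣ p - p₁ := by
        have : p - p₁ = (p₂ - p₁) * u * (X - C lam) ^ k := by
          have hv : v * m' = 1 - u * (X - C lam) ^ k := by linear_combination huv
          rw [hp, hv]; ring
        rw [this]; exact Dvd.intro_left _ rfl
      have d2 : m' ∣ p - p₂ := by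
        have : p - p₂ = (p₁ - p₂) * v * m' := by
          have hu : u * (X - C lam) ^ k = 1 - v * m' := by linear_combination huv
          rw [hp, hu]; ring
        rw [this]; exact Dvd.intro_left _ rfl
      refine ⟨p, ?_⟩
      rw [hm']
      apply hcop.mul_dvd
      · have : p ^ 2 - X = (p - p₁) * (p + p₁) + (p₁ ^ 2 - X) := by ring
        rw [this]; exact dvd_add (d1.mul_right _) hp₁
      · have : p ^ 2 - X = (p - p₂) * (p + p₂) + (p₂ ^ 2 - X) := by ring
        rw [this]; exact dvd_add (d2.mul_right _) hp₂
  exact key m.natDegree m le_rfl h0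


lemma mem_lowerBlockZero {n : ℕ} {g : Matrix (Fin n ⊕ Fin n) (Fin n ⊕ Fin n) ℂ} :
    g ∈ lowerBlockZero n ↔ ∀ i j, g (Sum.inr i) (Sum.inl j) = 0 := Iff.rfl

end SiegelAux

open SiegelAux in
theorem siegel_parabolic_sigma_stable_and_square_roots (n : ℕ) :
    (∀ g : Matrix (Fin n ⊕ Fin n) (Fin n ⊕ Fin n) ℂ,
        IsUnit g → StabVplus n g → IsUnit (sigmaMap n g) ∧ StabVplus n (sigmaMap n g)) ∧
    (∀ h : Matrix (Fin n ⊕ Fin n) (Fin n ⊕ Fin n) ℂ,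
        IsUnit h → StabVplus n h → sigmaMap n h = h⁻¹ →
        ∃ f : Matrix (Fin n ⊕ Fin n) (Fin n ⊕ Fin n) ℂ,
          IsUnit f ∧ StabVplus n f ∧ sigmaMap n f = f⁻¹ ∧ f * f = h) := by
  have detJ : IsUnit (Jmat n).det := (Matrix.isUnit_iff_isUnit_det _).mp isUnit_J
  constructor
  · -- part 1
    intro g hu hs
    set A := g.toBlocks₁₁ with hA
    set B := g.toBlocks₁₂ with hB
    set D := g.toBlocks₂₂ with hD
    have h21 : g.toBlocks₂₁ = 0 := by
      ext i j
      exact (stab_iff g).mp hs i j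
    have hg : g = fromBlocks A B 0 D := by
      conv_lhs => rw [← fromBlocks_toBlocks g, h21]
    have hAD : IsUnit A ∧ IsUnit D := by
      rwa [hg, isUnit_fromBlocks_zero₂₁] at hu
    have hginv : g⁻¹ = fromBlocks A⁻¹ (-(A⁻¹ * B * D⁻¹)) 0 D⁻¹ := by
      rw [hg]
      exact inv_fromBlocks_zero₂₁_of_isUnit_iff A B D (iff_of_true hAD.1 hAD.2)
    have hσ : sigmaMap n g = fromBlocks (D⁻¹)ᵀ ((A⁻¹ * B * D⁻¹)ᵀ) 0 (A⁻¹)ᵀ := by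
      rw [sigmaMap, ← Matrix.transpose_nonsing_inv, hginv, fromBlocks_transpose, conjJ]
      simp
    constructor
    · rw [hσ, isUnit_fromBlocks_zero₂₁]
      exact ⟨isUnit_transpose (isUnit_inv hAD.2), isUnit_transpose (isUnit_inv hAD.1)⟩
    · rw [stab_iff]
      intro i j
      rw [hσ]
      simp [fromBlocks_apply₂₁]
  · -- part 2
    intro h hu hs hσh
    have hdet : IsUnit h.det := (Matrix.isUnit_iff_isUnit_det h).mp hu
    have hdetT : IsUnit hᵀ.det := by rwa [Matrix.det_transpose]
    have hτh : tauL n h = h := by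
      show (Jmat n)⁻¹ * hᵀ * Jmat n = h
      have key : h = ((Jmat n)⁻¹ * (hᵀ)⁻¹ * Jmat n)⁻¹ := by
        rw [show (Jmat n)⁻¹ * (hᵀ)⁻¹ * Jmat n = sigmaMap n h from rfl, hσh,
          Matrix.nonsing_inv_nonsing_inv h hdet]
      conv_rhs => rw [key]
      rw [Matrix.mul_inv_rev, Matrix.mul_inv_rev,
        Matrix.nonsing_inv_nonsing_inv _ hdetT, Matrix.nonsing_inv_nonsing_inv _ detJ]
      simp only [Matrix.mul_assoc]
    have ev0 : (Matrix.charpoly h).eval 0 ≠ 0 := by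
      intro h0
      have hd := Matrix.det_eq_sign_charpoly_coeff h
      rw [Polynomial.coeff_zero_eq_eval_zero, h0, mul_zero] at hd
      exact hdet.ne_zero hd
    obtain ⟨p, q, hpq⟩ : ∃ p q : Polynomial ℂ,
        p ^ 2 - Polynomial.X = Matrix.charpoly h * q := by
      obtain ⟨p, hp⟩ := sqrtX_mod (Matrix.charpoly h) ev0
      obtain ⟨q, hq⟩ := hp
      exact ⟨p, q, hq⟩
    set f := Polynomial.aeval h p with hf
    have hff : f * f = h := by
      have e := congrArg (Polynomial.aeval h) hpq
      simp only [map_sub, map_pow, _root_.map_mul, Polynomial.aeval_X,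
        Matrix.aeval_self_charpoly, zero_mul] at e
      rw [sub_eq_zero] at e
      rw [show f * f = f ^ 2 from (sq f).symm, hf]
      exact e
    have hfu : IsUnit f := by
      rw [Matrix.isUnit_iff_isUnit_det]
      have : IsUnit (f.det * f.det) := by rw [← Matrix.det_mul, hff]; exact hdet
      exact isUnit_of_mul_isUnit_left this
    have hfS : StabVplus n f := by
      rw [stab_iff]
      have hmem : h ∈ lowerBlockZero n := mem_lowerBlockZero.mpr ((stab_iff h).mp hs)
      have h1 : f ∈ Algebra.adjoin ℂ {h} := by
        rw [Algebra.adjoin_singleton_eq_range_aeval]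
        exact ⟨p, rfl⟩
      exact mem_lowerBlockZero.mp
        (Algebra.adjoin_le (Set.singleton_subset_iff.mpr hmem) h1)
    have hτf : (Jmat n)⁻¹ * fᵀ * Jmat n = f := tauL_aeval h hτh p
    have hfT : fᵀ = Jmat n * f * (Jmat n)⁻¹ := by
      have e2 : Jmat n * ((Jmat n)⁻¹ * fᵀ * Jmat n) * (Jmat n)⁻¹ = fᵀ := by
        simp only [← Matrix.mul_assoc, mul_Jinv, Matrix.one_mul]
        rw [Matrix.mul_assoc, mul_Jinv, Matrix.mul_one]
      conv_rhs => rw [← hτf]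
      exact e2.symm
    have hσf : sigmaMap n f = f⁻¹ := by
      rw [sigmaMap, hfT, Matrix.mul_inv_rev, Matrix.mul_inv_rev,
        Matrix.nonsing_inv_nonsing_inv _ detJ]
      simp only [← Matrix.mul_assoc, Jinv_mul, Matrix.one_mul]
      rw [Matrix.mul_assoc, Jinv_mul, Matrix.mul_one]
    exact ⟨f, hfu, hfS, hσf, hff⟩
end

section
/- Let G be a group with an automorphism σ of order dividing 2, and let H ≤ G be a σ-stable subgroup such that for every h ∈ H with σ(h)=h⁻¹ there exists f ∈ H with σ(f)=f⁻¹ and f² = h. If g ∈ G satisfies g⁻¹σ(g) ∈ H, then there exists f ∈ H with σ(gf) = gf; in particular the coset gH contains a σ-fixed element. -/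
theorem coset_contains_sigma_fixed_element {G : Type*} [Group G]
    (σ : G →* G) (hσ : ∀ g, σ (σ g) = g)
    (H : Subgroup G) (hstab : ∀ h ∈ H, σ h ∈ H)
    (hsqrt : ∀ h ∈ H, σ h = h⁻¹ → ∃ f ∈ H, σ f = f⁻¹ ∧ f ^ 2 = h)
    (g : G) (hg : g⁻¹ * σ g ∈ H) :
    ∃ f ∈ H, σ (g * f) = g * f := by
  have hanti : σ (g⁻¹ * σ g) = (g⁻¹ * σ g)⁻¹ := by
    simp [map_mul, hσ, mul_inv_rev]
  obtain ⟨f, hfH, hfσ, hfsq⟩ := hsqrt _ hg hanti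
  refine ⟨f, hfH, ?_⟩
  have : σ g = g * (f * f) := by
    have := hfsq
    rw [pow_two] at this
    rw [this]
    group
  rw [map_mul, hfσ, this]
  group
end

section
/- Let ω = (τ₁; τ₂) with τ₁, τ₂ n×n partial permutation matrices and ω of rank n, and suppose ξ₁, ξ₂ are partial permutation matrices with (ξ₁;ξ₂) of rank n, g = [[τ₁,ξ₁],[τ₂,−ξ₂]] invertible, and ξ₁ᵀτ₁ − ξ₂ᵀτ₂ = 0. Then with σ(g) = Jₙ⁻¹(gᵀ)⁻¹Jₙ one has σ(g) = [[ξ₂,τ₂],[ξ₁,−τ₁]] · diag(−d₂⁻¹, −d₁⁻¹), where d₁ = τ₁ᵀτ₁+τ₂ᵀτ₂ and d₂ = ξ₁ᵀξ₁+ξ₂ᵀξ₂. In particular, the column span of the first n columns of σ(g) equals the column span of the 2n×n matrix (ξ₂; ξ₁). -/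
open Matrix

/-- A square matrix over ℂ of full rank is a unit. -/
lemma aux_isUnit_of_rank_eq {n : ℕ} (A : Matrix (Fin n) (Fin n) ℂ) (h : A.rank = n) :
    IsUnit A := by
  rw [← Matrix.mulVec_surjective_iff_isUnit]
  have htop : LinearMap.range A.mulVecLin = ⊤ := by
    apply Submodule.eq_top_of_finrank_eq
    rw [← Matrix.rank, h, Module.finrank_fintype_fun_eq_card, Fintype.card_fin]
  intro v
  obtain ⟨w, hw⟩ := LinearMap.range_eq_top.mp htop v
  exact ⟨w, hw⟩

/-- Partial permutation matrices have real (0/1) entries. -/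
lemma aux_conjTranspose_eq {n : ℕ} (τ : Matrix (Fin n) (Fin n) ℂ)
    (hτ : IsPartialPerm τ) : τᴴ = τᵀ := by
  ext i j
  simp only [Matrix.conjTranspose_apply, Matrix.transpose_apply]
  rcases hτ.1 j i with h | h <;> simp [h]

open scoped ComplexOrder in
/-- The Gram matrix of a full-rank real pair of partial permutation blocks is a unit. -/
lemma aux_isUnit_gram {n : ℕ} (τ₁ τ₂ : Matrix (Fin n) (Fin n) ℂ)
    (hτ₁ : IsPartialPerm τ₁) (hτ₂ : IsPartialPerm τ₂)
    (hrank : (Matrix.fromRows τ₁ τ₂).rank = n) :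
    IsUnit (τ₁ᵀ * τ₁ + τ₂ᵀ * τ₂) := by
  have key : (Matrix.fromRows τ₁ τ₂)ᴴ * Matrix.fromRows τ₁ τ₂ = τ₁ᵀ * τ₁ + τ₂ᵀ * τ₂ := by
    rw [Matrix.conjTranspose_fromRows_eq_fromCols_conjTranspose,
      Matrix.fromCols_mul_fromRows, aux_conjTranspose_eq τ₁ hτ₁, aux_conjTranspose_eq τ₂ hτ₂]
  apply aux_isUnit_of_rank_eq
  rw [← key, Matrix.rank_conjTranspose_mul_self, hrank]

theorem sigma_of_block_representative {n : ℕ}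
    (τ₁ τ₂ ξ₁ ξ₂ : Matrix (Fin n) (Fin n) ℂ)
    (hτ₁ : IsPartialPerm τ₁) (hτ₂ : IsPartialPerm τ₂)
    (hξ₁ : IsPartialPerm ξ₁) (hξ₂ : IsPartialPerm ξ₂)
    (hrankτ : (Matrix.fromRows τ₁ τ₂).rank = n)
    (hrankξ : (Matrix.fromRows ξ₁ ξ₂).rank = n)
    (hg : IsUnit (Matrix.fromBlocks τ₁ ξ₁ τ₂ (-ξ₂)))
    (horth : ξ₁ᵀ * τ₁ - ξ₂ᵀ * τ₂ = 0) :
    sigmaMap n (Matrix.fromBlocks τ₁ ξ₁ τ₂ (-ξ₂)) =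
        Matrix.fromBlocks ξ₂ τ₂ ξ₁ (-τ₁) *
          Matrix.fromBlocks (-(ξ₁ᵀ * ξ₁ + ξ₂ᵀ * ξ₂)⁻¹) 0 0
            (-(τ₁ᵀ * τ₁ + τ₂ᵀ * τ₂)⁻¹) ∧
      Submodule.span ℂ (Set.range fun j : Fin n =>
          fun i => sigmaMap n (Matrix.fromBlocks τ₁ ξ₁ τ₂ (-ξ₂)) i (Sum.inl j)) =
        Submodule.span ℂ (Set.range fun j : Fin n =>
          fun i => Matrix.fromRows ξ₂ ξ₁ i j) := by
  set d₁ : Matrix (Fin n) (Fin n) ℂ := τ₁ᵀ * τ₁ + τ₂ᵀ * τ₂ with hd₁def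
  set d₂ : Matrix (Fin n) (Fin n) ℂ := ξ₁ᵀ * ξ₁ + ξ₂ᵀ * ξ₂ with hd₂def
  have hd₁ : IsUnit d₁ := aux_isUnit_gram τ₁ τ₂ hτ₁ hτ₂ hrankτ
  have hd₂ : IsUnit d₂ := aux_isUnit_gram ξ₁ ξ₂ hξ₁ hξ₂ hrankξ
  have hd₁inv : d₁ * d₁⁻¹ = 1 :=
    Matrix.mul_nonsing_inv _ ((Matrix.isUnit_iff_isUnit_det _).mp hd₁)
  have hd₂inv : d₂ * d₂⁻¹ = 1 :=
    Matrix.mul_nonsing_inv _ ((Matrix.isUnit_iff_isUnit_det _).mp hd₂)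
  have horth' : τ₁ᵀ * ξ₁ = τ₂ᵀ * ξ₂ := by
    have := congrArg Matrix.transpose horth
    simpa [Matrix.transpose_sub, Matrix.transpose_mul, sub_eq_zero] using this
  have horth2 : ξ₁ᵀ * τ₁ = ξ₂ᵀ * τ₂ := sub_eq_zero.mp horth
  set g : Matrix (Fin n ⊕ Fin n) (Fin n ⊕ Fin n) ℂ := Matrix.fromBlocks τ₁ ξ₁ τ₂ (-ξ₂) with hgdef
  set RHS : Matrix (Fin n ⊕ Fin n) (Fin n ⊕ Fin n) ℂ :=
    Matrix.fromBlocks ξ₂ τ₂ ξ₁ (-τ₁) * Matrix.fromBlocks (-d₂⁻¹) 0 0 (-d₁⁻¹) with hRdef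
  -- J has explicit inverse
  have hJJ' : Jmat n * Matrix.fromBlocks 0 1 (-1) 0 = 1 := by
    rw [Jmat, Matrix.fromBlocks_multiply]
    simp [← Matrix.fromBlocks_one]
  have hJinv : (Jmat n)⁻¹ = Matrix.fromBlocks 0 1 (-1) 0 := Matrix.inv_eq_right_inv hJJ'
  have hJ'J : (Jmat n)⁻¹ * Jmat n = 1 := by
    rw [hJinv, Jmat, Matrix.fromBlocks_multiply]
    simp [← Matrix.fromBlocks_one]
  -- the key computation: gᵀ * (J * RHS) = J
  have key : gᵀ * (Jmat n * RHS) = Jmat n := by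
    have hR : RHS = Matrix.fromBlocks (-(ξ₂ * d₂⁻¹)) (-(τ₂ * d₁⁻¹)) (-(ξ₁ * d₂⁻¹)) (τ₁ * d₁⁻¹) := by
      rw [hRdef, Matrix.fromBlocks_multiply]
      simp [Matrix.mul_neg, Matrix.neg_mul]
    rw [hR, hgdef, Jmat, Matrix.fromBlocks_transpose, Matrix.fromBlocks_multiply,
      Matrix.fromBlocks_multiply]
    rw [Matrix.fromBlocks_inj]
    refine ⟨?_, ?_, ?_, ?_⟩ <;>
      simp only [Matrix.zero_mul, Matrix.one_mul, Matrix.mul_neg, Matrix.neg_mul, neg_zero,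
        add_zero, zero_add, neg_neg, Matrix.transpose_neg, ← Matrix.mul_assoc]
    · rw [horth']
      exact add_neg_cancel _
    · rw [← neg_add, ← Matrix.add_mul, ← hd₁def, hd₁inv]
    · rw [← Matrix.add_mul, ← hd₂def, hd₂inv]
    · rw [horth2]
      exact neg_add_cancel _
  have key2 : gᵀ * (Jmat n * RHS * (Jmat n)⁻¹) = 1 := by
    calc gᵀ * (Jmat n * RHS * (Jmat n)⁻¹) = gᵀ * (Jmat n * RHS) * (Jmat n)⁻¹ := by
          simp only [Matrix.mul_assoc]
      _ = Jmat n * (Jmat n)⁻¹ := by rw [key]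
      _ = 1 := by
          rw [hJinv]; exact hJJ'
  have hginv : (gᵀ)⁻¹ = Jmat n * RHS * (Jmat n)⁻¹ := Matrix.inv_eq_right_inv key2
  have part1 : sigmaMap n g = RHS := by
    rw [sigmaMap, hginv]
    calc (Jmat n)⁻¹ * (Jmat n * RHS * (Jmat n)⁻¹) * Jmat n
        = ((Jmat n)⁻¹ * Jmat n) * RHS * ((Jmat n)⁻¹ * Jmat n) := by
          simp only [Matrix.mul_assoc]
      _ = RHS := by rw [hJ'J]; simp
  refine ⟨part1, ?_⟩
  -- Part 2: span of first n columns
  set F : Matrix (Fin n ⊕ Fin n) (Fin n) ℂ := Matrix.fromRows ξ₂ ξ₁ with hFdef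
  set D : Matrix (Fin n) (Fin n) ℂ := -d₂⁻¹ with hDdef
  have hcols : (fun j : Fin n => fun i => sigmaMap n g i (Sum.inl j)) = (F * D)ᵀ := by
    funext j i
    rw [part1, hRdef]
    cases i <;>
      simp [hFdef, Matrix.mul_apply, Matrix.fromBlocks, Matrix.fromRows, Matrix.transpose_apply,
          Matrix.fromRows_apply_inl, Matrix.fromRows_apply_inr] <;> rfl
  have hDunit : IsUnit D := by
    rw [hDdef]
    exact (Matrix.isUnit_nonsing_inv_iff.mpr hd₂).neg
  have hDsurj : Function.Surjective D.mulVecLin := Matrix.mulVec_surjective_iff_isUnit.mpr hDunit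
  rw [hcols]
  have h1 : Submodule.span ℂ (Set.range (F * D)ᵀ) = LinearMap.range (F * D).mulVecLin :=
    (Matrix.range_mulVecLin _).symm
  have h2 : Submodule.span ℂ (Set.range fun j : Fin n => fun i => F i j) =
      LinearMap.range F.mulVecLin := by
    have : (fun j : Fin n => fun i => F i j) = Fᵀ := rfl
    rw [this]
    exact (Matrix.range_mulVecLin _).symm
  rw [h1, h2, Matrix.mulVecLin_mul,
    LinearMap.range_comp_of_range_eq_top _ (LinearMap.range_eq_top.mpr hDsurj)]
end

section
/- Let τ₁, τ₂ be n×n partial permutation matrices with (τ₁;τ₂) of rank n. If there exists a lower-triangular invertible matrix b ∈ Bₙ⁻ such that τ₁ᵀ b τ₂ is symmetric, then τ₁ᵀτ₂ is itself symmetric. -/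
open Matrix

theorem symmetric_of_twisted_symmetric {n : ℕ}
    (τ₁ τ₂ : Matrix (Fin n) (Fin n) ℂ)
    (h₁ : IsPartialPerm τ₁) (h₂ : IsPartialPerm τ₂)
    (hrank : (Matrix.fromRows τ₁ τ₂).rank = n)
    (b : Matrix (Fin n) (Fin n) ℂ) (hb : IsUnit b)
    (hlow : ∀ i j : Fin n, i < j → b i j = 0)
    (hsym : (τ₁ᵀ * b * τ₂)ᵀ = τ₁ᵀ * b * τ₂) :
    (τ₁ᵀ * τ₂)ᵀ = τ₁ᵀ * τ₂ := by
  classical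
  obtain ⟨h₁01, h₁row, h₁col⟩ := h₁
  obtain ⟨h₂01, h₂row, h₂col⟩ := h₂
  -- diagonal entries of b are nonzero
  have hdiag : ∀ i, b i i ≠ 0 := by
    have hdet : IsUnit b.det := (Matrix.isUnit_iff_isUnit_det b).mp hb
    have hdet2 : b.det = ∏ i, b i i := by
      apply Matrix.det_of_lowerTriangular
      intro i j hij
      exact hlow i j (by simpa using hij)
    rw [hdet2] at hdet
    intro i hi
    have : (∏ i, b i i) = 0 := Finset.prod_eq_zero (Finset.mem_univ i) hi
    rw [this] at hdet
    exact hdet.ne_zero rfl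
  -- totality: every column has a 1 in τ₁ or τ₂
  have htot : ∀ c : Fin n, (∃ i, τ₁ i c = 1) ∨ (∃ i, τ₂ i c = 1) := by
    intro c
    by_contra hcon
    push_neg at hcon
    obtain ⟨hc1, hc2⟩ := hcon
    have hcol0 : ∀ i, Matrix.fromRows τ₁ τ₂ i c = 0 := by
      intro i
      cases i with
      | inl i =>
        have := (h₁01 i c).resolve_right (hc1 i)
        simpa [Matrix.fromRows_apply_inl, Matrix.fromRows_apply_inr] using this
      | inr i =>
        have := (h₂01 i c).resolve_right (hc2 i)
        simpa [Matrix.fromRows_apply_inl, Matrix.fromRows_apply_inr] using this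
    have hker : Pi.single c (1 : ℂ) ∈ LinearMap.ker (Matrix.fromRows τ₁ τ₂).mulVecLin := by
      rw [LinearMap.mem_ker]
      ext i
      simp [Matrix.mulVecLin_apply, hcol0 i]
    have hrn := LinearMap.finrank_range_add_finrank_ker
      (Matrix.fromRows τ₁ τ₂).mulVecLin
    rw [Module.finrank_fin_fun] at hrn
    have hrank' : Module.finrank ℂ (LinearMap.range (Matrix.fromRows τ₁ τ₂).mulVecLin) = n :=
      hrank
    have hker0 : Module.finrank ℂ (LinearMap.ker (Matrix.fromRows τ₁ τ₂).mulVecLin) = 0 := by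
      omega
    have hbot : LinearMap.ker (Matrix.fromRows τ₁ τ₂).mulVecLin = ⊥ :=
      Submodule.finrank_eq_zero.mp hker0
    rw [hbot, Submodule.mem_bot] at hker
    have := congrFun hker c
    simp at this
  -- entry computation lemmas for τ₁ᵀ * b * τ₂
  have E1 : ∀ (v w a c : Fin n), τ₁ v a = 1 → τ₂ w c = 1 →
      (τ₁ᵀ * b * τ₂) a c = b v w := by
    intro v w a c hv hw
    have inner : ∀ i', (τ₁ᵀ * b) a i' = b v i' := by
      intro i'
      rw [Matrix.mul_apply, Finset.sum_eq_single v]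
      · simp [Matrix.transpose_apply, hv]
      · intro i _ hne
        rcases h₁01 i a with h0 | hone
        · simp [Matrix.transpose_apply, h0]
        · exact absurd (h₁col i v a hone hv) hne
      · intro h; exact absurd (Finset.mem_univ v) h
    rw [Matrix.mul_apply, Finset.sum_eq_single w]
    · rw [inner w, hw, mul_one]
    · intro i' _ hne
      rcases h₂01 i' c with h0 | hone
      · simp [h0]
      · exact absurd (h₂col i' w c hone hw) hne
    · intro h; exact absurd (Finset.mem_univ w) h
  have E2 : ∀ (a c : Fin n), (¬ ∃ i, τ₁ i a = 1) → (τ₁ᵀ * b * τ₂) a c = 0 := by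
    intro a c hno
    rw [Matrix.mul_apply]
    apply Finset.sum_eq_zero
    intro i' _
    have : (τ₁ᵀ * b) a i' = 0 := by
      rw [Matrix.mul_apply]
      apply Finset.sum_eq_zero
      intro i _
      have h0 : τ₁ i a = 0 := (h₁01 i a).resolve_right (fun h => hno ⟨i, h⟩)
      simp [Matrix.transpose_apply, h0]
    simp [this]
  have E3 : ∀ (a c : Fin n), (¬ ∃ i, τ₂ i c = 1) → (τ₁ᵀ * b * τ₂) a c = 0 := by
    intro a c hno
    rw [Matrix.mul_apply]
    apply Finset.sum_eq_zero
    intro i' _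
    have h0 : τ₂ i' c = 0 := (h₂01 i' c).resolve_right (fun h => hno ⟨i', h⟩)
    simp [h0]
  -- the key consequence of symmetry of τ₁ᵀ b τ₂
  have key : ∀ v a c : Fin n, τ₁ v a = 1 → τ₂ v c = 1 →
      ∃ p q : Fin n, τ₁ p c = 1 ∧ τ₂ q a = 1 ∧ q ≤ p := by
    intro v a c hva hvc
    have hCac : (τ₁ᵀ * b * τ₂) a c = b v v := E1 v v a c hva hvc
    have hsym' : (τ₁ᵀ * b * τ₂) c a = b v v := by
      have h := congrFun (congrFun hsym a) c
      rw [Matrix.transpose_apply] at h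
      rw [h, hCac]
    have hp : ∃ p, τ₁ p c = 1 := by
      by_contra hno
      rw [E2 c a hno] at hsym'
      exact hdiag v hsym'.symm
    have hq : ∃ q, τ₂ q a = 1 := by
      by_contra hno
      rw [E3 c a hno] at hsym'
      exact hdiag v hsym'.symm
    obtain ⟨p, hpone⟩ := hp
    obtain ⟨q, hqone⟩ := hq
    refine ⟨p, q, hpone, hqone, ?_⟩
    by_contra hlt
    push_neg at hlt
    have : (τ₁ᵀ * b * τ₂) c a = b p q := E1 p q c a hpone hqone
    rw [hsym'] at this
    rw [hlow p q hlt] at this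
    exact hdiag v this
  -- choice functions
  have hfrowE : ∀ c : Fin n, ∃ i : Fin n, (∃ i', τ₁ i' c = 1) → τ₁ i c = 1 := by
    intro c
    by_cases h : ∃ i', τ₁ i' c = 1
    · obtain ⟨i, hi⟩ := h; exact ⟨i, fun _ => hi⟩
    · exact ⟨c, fun hh => absurd hh h⟩
  choose frow hfrow using hfrowE
  have hgrowE : ∀ c : Fin n, ∃ i : Fin n, (∃ i', τ₂ i' c = 1) → τ₂ i c = 1 := by
    intro c
    by_cases h : ∃ i', τ₂ i' c = 1
    · obtain ⟨i, hi⟩ := h; exact ⟨i, fun _ => hi⟩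
    · exact ⟨c, fun hh => absurd hh h⟩
  choose grow hgrow using hgrowE
  have keyT : ∀ v : Fin n, ∃ p q a c : Fin n,
      ((∃ x, τ₁ v x = 1) ∧ (∃ x, τ₂ v x = 1)) →
        τ₁ v a = 1 ∧ τ₂ v c = 1 ∧ τ₁ p c = 1 ∧ τ₂ q a = 1 ∧ q ≤ p := by
    intro v
    by_cases hv : (∃ x, τ₁ v x = 1) ∧ (∃ x, τ₂ v x = 1)
    · obtain ⟨⟨a, ha⟩, ⟨c, hc⟩⟩ := hv
      obtain ⟨p, q, hpone, hqone, hqp⟩ := key v a c ha hc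
      exact ⟨p, q, a, c, fun _ => ⟨ha, hc, hpone, hqone, hqp⟩⟩
    · exact ⟨v, v, v, v, fun h => absurd h hv⟩
  choose pf qf af cf hkey using keyT
  -- finsets
  set F : Finset (Fin n) := Finset.univ.filter (fun c => ∃ i, τ₁ i c = 1) with hF
  set G : Finset (Fin n) := Finset.univ.filter (fun c => ∃ i, τ₂ i c = 1) with hG
  set K : Finset (Fin n) := F ∩ G with hK
  set Fv : Finset (Fin n) := Finset.univ.filter (fun v => ∃ c, τ₁ v c = 1) with hFv
  set Gv : Finset (Fin n) := Finset.univ.filter (fun v => ∃ c, τ₂ v c = 1) with hGv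
  set T : Finset (Fin n) := Fv ∩ Gv with hT
  have hmemF : ∀ c, c ∈ F ↔ ∃ i, τ₁ i c = 1 := by intro c; simp [hF]
  have hmemG : ∀ c, c ∈ G ↔ ∃ i, τ₂ i c = 1 := by intro c; simp [hG]
  have hmemFv : ∀ v, v ∈ Fv ↔ ∃ c, τ₁ v c = 1 := by intro v; simp [hFv]
  have hmemGv : ∀ v, v ∈ Gv ↔ ∃ c, τ₂ v c = 1 := by intro v; simp [hGv]
  have hmemT : ∀ v, v ∈ T ↔ ((∃ c, τ₁ v c = 1) ∧ (∃ c, τ₂ v c = 1)) := by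
    intro v; rw [hT, Finset.mem_inter, hmemFv, hmemGv]
  have hmemK : ∀ c, c ∈ K ↔ ((∃ i, τ₁ i c = 1) ∧ (∃ i, τ₂ i c = 1)) := by
    intro c; rw [hK, Finset.mem_inter, hmemF, hmemG]
  -- frow is injective on F, images
  have hfrowinj : ∀ c ∈ F, ∀ c' ∈ F, frow c = frow c' → c = c' := by
    intro c hc c' hc' heq
    have h1 : τ₁ (frow c) c = 1 := hfrow c ((hmemF c).mp hc)
    have h2 : τ₁ (frow c) c' = 1 := by rw [heq]; exact hfrow c' ((hmemF c').mp hc')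
    exact h₁row (frow c) c c' h1 h2
  have hgrowinj : ∀ c ∈ G, ∀ c' ∈ G, grow c = grow c' → c = c' := by
    intro c hc c' hc' heq
    have h1 : τ₂ (grow c) c = 1 := hgrow c ((hmemG c).mp hc)
    have h2 : τ₂ (grow c) c' = 1 := by rw [heq]; exact hgrow c' ((hmemG c').mp hc')
    exact h₂row (grow c) c c' h1 h2
  have hFvimg : Fv = F.image frow := by
    ext v
    rw [hmemFv, Finset.mem_image]
    constructor
    · rintro ⟨c, hc⟩
      have hcF : c ∈ F := (hmemF c).mpr ⟨v, hc⟩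
      refine ⟨c, hcF, ?_⟩
      exact h₁col (frow c) v c (hfrow c ⟨v, hc⟩) hc
    · rintro ⟨c, hcF, rfl⟩
      exact ⟨c, hfrow c ((hmemF c).mp hcF)⟩
  have hGvimg : Gv = G.image grow := by
    ext v
    rw [hmemGv, Finset.mem_image]
    constructor
    · rintro ⟨c, hc⟩
      have hcG : c ∈ G := (hmemG c).mpr ⟨v, hc⟩
      refine ⟨c, hcG, ?_⟩
      exact h₂col (grow c) v c (hgrow c ⟨v, hc⟩) hc
    · rintro ⟨c, hcG, rfl⟩
      exact ⟨c, hgrow c ((hmemG c).mp hcG)⟩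
  have hcardFv : Fv.card = F.card := by
    rw [hFvimg]; exact Finset.card_image_of_injOn hfrowinj
  have hcardGv : Gv.card = G.card := by
    rw [hGvimg]; exact Finset.card_image_of_injOn hgrowinj
  -- counting
  have huniv : F ∪ G = Finset.univ := by
    ext c
    simp only [Finset.mem_union, Finset.mem_univ, iff_true, hmemF, hmemG]
    exact htot c
  have hcount1 : n + K.card = F.card + G.card := by
    have := Finset.card_union_add_card_inter F G
    rw [huniv, Finset.card_univ, Fintype.card_fin] at this
    rw [← hK] at this
    exact this
  have hcount2 : Fv.card + Gv.card = (Fv ∪ Gv).card + T.card := by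
    rw [hT, (Finset.card_union_add_card_inter Fv Gv).symm]
  have hcount3 : (Fv ∪ Gv).card ≤ n := by
    have := Finset.card_le_univ (Fv ∪ Gv)
    simpa using this
  have hKT : K.card ≤ T.card := by omega
  -- fK = T and gK = T
  set fK : Finset (Fin n) := K.image frow with hfK
  set gK : Finset (Fin n) := K.image grow with hgK
  have hcardfK : fK.card = K.card :=
    Finset.card_image_of_injOn (fun c hc c' hc' =>
      hfrowinj c (Finset.mem_of_mem_inter_left hc) c' (Finset.mem_of_mem_inter_left hc'))
  have hcardgK : gK.card = K.card :=
    Finset.card_image_of_injOn (fun c hc c' hc' =>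
      hgrowinj c (Finset.mem_of_mem_inter_right hc) c' (Finset.mem_of_mem_inter_right hc'))
  have hTfK : T ⊆ fK := by
    intro v hv
    have hvT := (hmemT v).mp hv
    obtain ⟨hva, hvc, hpone, hqone, hqp⟩ := hkey v hvT
    rw [hfK, Finset.mem_image]
    have haK : af v ∈ K := (hmemK (af v)).mpr ⟨⟨v, hva⟩, ⟨qf v, hqone⟩⟩
    refine ⟨af v, haK, ?_⟩
    exact h₁col (frow (af v)) v (af v) (hfrow (af v) ⟨v, hva⟩) hva
  have hTgK : T ⊆ gK := by
    intro v hv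
    have hvT := (hmemT v).mp hv
    obtain ⟨hva, hvc, hpone, hqone, hqp⟩ := hkey v hvT
    rw [hgK, Finset.mem_image]
    have hcK : cf v ∈ K := (hmemK (cf v)).mpr ⟨⟨pf v, hpone⟩, ⟨v, hvc⟩⟩
    refine ⟨cf v, hcK, ?_⟩
    exact h₂col (grow (cf v)) v (cf v) (hgrow (cf v) ⟨v, hvc⟩) hvc
  have hfKT : T = fK := Finset.eq_of_subset_of_card_le hTfK (by omega)
  have hgKT : T = gK := Finset.eq_of_subset_of_card_le hTgK (by omega)
  -- pf and qf map T to T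
  have hpT : ∀ v ∈ T, pf v ∈ T := by
    intro v hv
    have hvT := (hmemT v).mp hv
    obtain ⟨hva, hvc, hpone, hqone, hqp⟩ := hkey v hvT
    rw [hfKT, hfK, Finset.mem_image]
    have hcK : cf v ∈ K := (hmemK (cf v)).mpr ⟨⟨pf v, hpone⟩, ⟨v, hvc⟩⟩
    refine ⟨cf v, hcK, ?_⟩
    exact h₁col (frow (cf v)) (pf v) (cf v) (hfrow (cf v) ⟨pf v, hpone⟩) hpone
  have hqT : ∀ v ∈ T, qf v ∈ T := by
    intro v hv
    have hvT := (hmemT v).mp hv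
    obtain ⟨hva, hvc, hpone, hqone, hqp⟩ := hkey v hvT
    rw [hgKT, hgK, Finset.mem_image]
    have haK : af v ∈ K := (hmemK (af v)).mpr ⟨⟨v, hva⟩, ⟨qf v, hqone⟩⟩
    refine ⟨af v, haK, ?_⟩
    exact h₂col (grow (af v)) (qf v) (af v) (hgrow (af v) ⟨qf v, hqone⟩) hqone
  -- injectivity of pf, qf on T
  have hpinj : ∀ v ∈ T, ∀ v' ∈ T, pf v = pf v' → v = v' := by
    intro v hv v' hv' heq
    obtain ⟨hva, hvc, hpone, hqone, hqp⟩ := hkey v ((hmemT v).mp hv)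
    obtain ⟨hva', hvc', hpone', hqone', hqp'⟩ := hkey v' ((hmemT v').mp hv')
    have h2 : τ₁ (pf v) (cf v') = 1 := by rw [heq]; exact hpone'
    have hcc : cf v = cf v' := h₁row (pf v) (cf v) (cf v') hpone h2
    have h3 : τ₂ v' (cf v) = 1 := by rw [hcc]; exact hvc'
    exact h₂col v v' (cf v) hvc h3
  have hqinj : ∀ v ∈ T, ∀ v' ∈ T, qf v = qf v' → v = v' := by
    intro v hv v' hv' heq
    obtain ⟨hva, hvc, hpone, hqone, hqp⟩ := hkey v ((hmemT v).mp hv)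
    obtain ⟨hva', hvc', hpone', hqone', hqp'⟩ := hkey v' ((hmemT v').mp hv')
    have h2 : τ₂ (qf v) (af v') = 1 := by rw [heq]; exact hqone'
    have haa : af v = af v' := h₂row (qf v) (af v) (af v') hqone h2
    have h3 : τ₁ v' (af v) = 1 := by rw [haa]; exact hva'
    exact h₁col v v' (af v) hva h3
  -- image of T under pf and qf is T
  have hTp : T.image pf = T := by
    apply Finset.eq_of_subset_of_card_le
    · intro w hw
      rw [Finset.mem_image] at hw
      obtain ⟨v, hv, rfl⟩ := hw
      exact hpT v hv
    · rw [Finset.card_image_of_injOn hpinj]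
  have hTq : T.image qf = T := by
    apply Finset.eq_of_subset_of_card_le
    · intro w hw
      rw [Finset.mem_image] at hw
      obtain ⟨v, hv, rfl⟩ := hw
      exact hqT v hv
    · rw [Finset.card_image_of_injOn hqinj]
  -- sums
  have hsump : (∑ v ∈ T, ((pf v : ℕ))) = ∑ v ∈ T, (v : ℕ) := by
    have h := Finset.sum_image (f := fun w : Fin n => (w : ℕ)) (g := pf) hpinj
    rw [hTp] at h
    exact h.symm
  have hsumq : (∑ v ∈ T, ((qf v : ℕ))) = ∑ v ∈ T, (v : ℕ) := by
    have h := Finset.sum_image (f := fun w : Fin n => (w : ℕ)) (g := qf) hqinj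
    rw [hTq] at h
    exact h.symm
  -- pointwise equality
  have hpq : ∀ v ∈ T, qf v = pf v := by
    by_contra hcon
    push_neg at hcon
    obtain ⟨v₀, hv₀, hne⟩ := hcon
    have hlt : (qf v₀ : ℕ) < (pf v₀ : ℕ) := by
      obtain ⟨_, _, _, _, hqp⟩ := hkey v₀ ((hmemT v₀).mp hv₀)
      exact lt_of_le_of_ne (by exact_mod_cast hqp) (fun h => hne (Fin.val_injective h))
    have hle : ∀ v ∈ T, (qf v : ℕ) ≤ (pf v : ℕ) := by
      intro v hv
      obtain ⟨_, _, _, _, hqp⟩ := hkey v ((hmemT v).mp hv)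
      exact_mod_cast hqp
    have : (∑ v ∈ T, ((qf v : ℕ))) < ∑ v ∈ T, ((pf v : ℕ)) :=
      Finset.sum_lt_sum hle ⟨v₀, hv₀, hlt⟩
    omega
  -- swap lemma
  have hswap : ∀ a c : Fin n, (∃ v, τ₁ v a = 1 ∧ τ₂ v c = 1) →
      ∃ v, τ₁ v c = 1 ∧ τ₂ v a = 1 := by
    rintro a c ⟨v, hva, hvc⟩
    have hvT : v ∈ T := (hmemT v).mpr ⟨⟨a, hva⟩, ⟨c, hvc⟩⟩
    obtain ⟨hva', hvc', hpone, hqone, hqp⟩ := hkey v ((hmemT v).mp hvT)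
    have haf : af v = a := h₁row v (af v) a hva' hva
    have hcf : cf v = c := h₂row v (cf v) c hvc' hvc
    refine ⟨pf v, by rwa [hcf] at hpone, ?_⟩
    have := hqone
    rw [haf, hpq v hvT] at this
    exact this
  -- entry formula for τ₁ᵀ * τ₂
  have hent : ∀ a c : Fin n,
      (τ₁ᵀ * τ₂) a c = if ∃ v, τ₁ v a = 1 ∧ τ₂ v c = 1 then 1 else 0 := by
    intro a c
    split_ifs with h
    · obtain ⟨v, hva, hvc⟩ := h
      rw [Matrix.mul_apply, Finset.sum_eq_single v]
      · simp [Matrix.transpose_apply, hva, hvc]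
      · intro i _ hne
        rcases h₁01 i a with h0 | hone
        · simp [Matrix.transpose_apply, h0]
        · exact absurd (h₁col i v a hone hva) hne
      · intro hh; exact absurd (Finset.mem_univ v) hh
    · rw [Matrix.mul_apply]
      apply Finset.sum_eq_zero
      intro i _
      rcases h₁01 i a with h0 | hone
      · simp [Matrix.transpose_apply, h0]
      · rcases h₂01 i c with h0 | htwo
        · simp [h0]
        · exact absurd ⟨hone, htwo⟩ (fun hh => h ⟨i, hh⟩)
  -- conclude
  ext a c
  rw [Matrix.transpose_apply, hent, hent]
  split_ifs with g1 g2 g2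
  · rfl
  · exact absurd (hswap c a g1) g2
  · exact absurd (hswap a c g2) g1
  · rfl
end
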